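/- Let K be a field of characteristic p > 0 and n ≥ 1. The quotient algebra K[T^{Γ_{p,n}}]/(T^{p^n}) has dimension exactly p^n over K; in particular it is generated by the classes x_j of T^{p^n - p^j} (0 ≤ j ≤ n-1), which satisfy x_j^p = 0. -/

import Mathlib

set_option synthInstance.maxHeartbeats 800000

/-- Generators of the numerical semigroup `Γ_{p,n}`. -/
def gammaGen (p n : ℕ) : Set ℕ :=
  {m | m = p ^ n ∨ ∃ j < n, m = p ^ n - p ^ j}

/-- The numerical semigroup `Γ_{p,n} = ⟨p^n, p^n - p^{n-1}, …, p^n - 1⟩`. -/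
def Gamma (p n : ℕ) : AddSubmonoid ℕ := AddSubmonoid.closure (gammaGen p n)

/-- The subalgebra `K[T^{Γ_{p,n}}]` of `K[T]` spanned by the monomials `T^a`
with `a ∈ Γ_{p,n}`. -/
noncomputable def gammaAlg (K : Type*) [Field K] (p n : ℕ) :
    Subalgebra K (Polynomial K) :=
  Algebra.adjoin K {f | ∃ a ∈ Gamma p n, f = Polynomial.X ^ a}

open Finset

namespace GammaAux

variable {p n : ℕ}

/-- digit sum -/
def ds (p m : ℕ) : ℕ := (Nat.digits p m).sum

lemma ds_eq (hp : 1 < p) (m : ℕ) : ds p m = m % p + ds p (m / p) := by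
  rcases Nat.eq_zero_or_pos m with h | h
  · subst h; simp [ds]
  · rw [ds, Nat.digits_def' hp h, List.sum_cons]; rfl

/-- key counting lemma -/
lemma count_ge (hp : 1 < p) :
    ∀ n (e : ℕ) (c : ℕ → ℕ) (l m : ℕ), m < p ^ n →
      e + ∑ j ∈ range n, c j * p ^ j = l * p ^ n + m →
      l + ds p m ≤ e + ∑ j ∈ range n, c j := by
  intro n
  induction n with
  | zero =>
    intro e c l m hm heq
    simp only [pow_zero] at hm
    simp only [range_zero, sum_empty, add_zero, pow_zero, mul_one] at heq
    have hm0 : m = 0 := by omega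
    subst hm0
    simp only [ds, Nat.digits_zero, List.sum_nil, range_zero, sum_empty, add_zero]
    omega
  | succ n ih =>
    intro e c l m hm heq
    have hp0 : 0 < p := by omega
    rw [Finset.sum_range_succ'] at heq
    simp only [pow_zero, mul_one] at heq
    have hsum : ∑ j ∈ range n, c (j + 1) * p ^ (j + 1)
        = p * ∑ j ∈ range n, c (j + 1) * p ^ j := by
      rw [Finset.mul_sum]
      refine Finset.sum_congr rfl fun j _ => by ring
    rw [hsum] at heq
    set T := ∑ j ∈ range n, c (j + 1) * p ^ j with hT
    have hpn : p ^ (n + 1) = p * p ^ n := by ring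
    have hmod : (e + c 0) % p = m % p := by
      have h1 : (e + (p * T + c 0)) % p = (l * p ^ (n + 1) + m) % p := by rw [heq]
      have h2 : (e + (p * T + c 0)) % p = (e + c 0) % p := by
        rw [show e + (p * T + c 0) = p * T + (e + c 0) from by ring]
        exact Nat.mul_add_mod p T (e + c 0)
      have h3 : (l * p ^ (n + 1) + m) % p = m % p := by
        rw [show l * p ^ (n + 1) = p * (l * p ^ n) from by rw [hpn]; ring]
        exact Nat.mul_add_mod p (l * p ^ n) m
      omega
    set d := (e + c 0) / p with hd
    have hec : e + c 0 = p * d + m % p := by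
      have h := Nat.div_add_mod (e + c 0) p
      rw [← hd] at h
      omega
    have hm' : m / p < p ^ n := by
      have := Nat.div_lt_div_of_lt_of_dvd (dvd_pow_self p (Nat.succ_ne_zero n)) hm
      rwa [hpn, Nat.mul_div_cancel_left _ hp0] at this
    have heq' : d + T = l * p ^ n + m / p := by
      have h7 : m = p * (m / p) + m % p := by
        have := Nat.div_add_mod m p; omega
      have h6 : l * p ^ (n + 1) = p * (l * p ^ n) := by rw [hpn]; ring
      have h8 : p * (d + T) = p * d + p * T := by ring
      have h9 : p * (l * p ^ n + m / p) = p * (l * p ^ n) + p * (m / p) := by ring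
      have h10 : p * (d + T) = p * (l * p ^ n + m / p) := by omega
      exact Nat.eq_of_mul_eq_mul_left hp0 h10
    have key : l + ds p (m / p) ≤ d + ∑ j ∈ range n, c (j + 1) := by
      simpa using ih d (fun j => c (j + 1)) l (m / p) hm' heq'
    have hds : ds p m = m % p + ds p (m / p) := ds_eq hp m
    rw [Finset.sum_range_succ']
    have hdp : d ≤ p * d := Nat.le_mul_of_pos_left d hp0
    omega

/-- representation of m < p^n with exactly ds p m coins -/
lemma exists_rep (hp : 1 < p) :
    ∀ n, ∀ m < p ^ n, ∃ c : ℕ → ℕ,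
      (∑ j ∈ range n, c j = ds p m) ∧ (∑ j ∈ range n, c j * p ^ j = m) := by
  intro n
  induction n with
  | zero =>
    intro m hm
    simp only [pow_zero] at hm
    have hm0 : m = 0 := by omega
    subst hm0
    exact ⟨fun _ => 0, by simp [ds], by simp⟩
  | succ n ih =>
    intro m hm
    have hp0 : 0 < p := by omega
    have hm' : m / p < p ^ n := by
      have hpn : p ^ (n + 1) = p * p ^ n := by ring
      have := Nat.div_lt_div_of_lt_of_dvd (dvd_pow_self p (Nat.succ_ne_zero n)) hm
      rwa [hpn, Nat.mul_div_cancel_left _ hp0] at this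
    obtain ⟨c', hc1, hc2⟩ := ih (m / p) hm'
    refine ⟨fun j => if j = 0 then m % p else c' (j - 1), ?_, ?_⟩
    · rw [Finset.sum_range_succ',
        show (∑ j ∈ range n, if j + 1 = 0 then m % p else c' (j + 1 - 1))
          = ∑ j ∈ range n, c' j from Finset.sum_congr rfl fun j _ => by simp]
      norm_num
      rw [hc1, ds_eq hp m]; omega
    · rw [Finset.sum_range_succ',
        show (∑ j ∈ range n, (if j + 1 = 0 then m % p else c' (j + 1 - 1)) * p ^ (j + 1))
          = p * ∑ j ∈ range n, c' j * p ^ j from by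
            rw [Finset.mul_sum]; exact Finset.sum_congr rfl fun j _ => by simp; ring]
      norm_num
      rw [hc2]
      have := Nat.div_add_mod m p; omega


/-- decomposition of a member of Gamma -/
lemma mem_gamma_elim (hp : 1 < p) {a : ℕ} (ha : a ∈ Gamma p n) :
    ∃ (c0 : ℕ) (c : ℕ → ℕ),
      a + ∑ j ∈ range n, c j * p ^ j = (c0 + ∑ j ∈ range n, c j) * p ^ n := by
  induction ha using AddSubmonoid.closure_induction with
  | mem y hy =>
    rcases hy with hy | ⟨j, hj, hy⟩
    · exact ⟨1, fun _ => 0, by simp [hy]⟩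
    · refine ⟨0, fun i => if i = j then 1 else 0, ?_⟩
      have hle : p ^ j ≤ p ^ n := Nat.pow_le_pow_right (by omega) (le_of_lt hj)
      have h1 : ∑ i ∈ range n, (if i = j then 1 else 0) * p ^ i = p ^ j := by
        rw [Finset.sum_eq_single j]
        · simp
        · intro i _ hij; simp [hij]
        · intro hj'; exact absurd (Finset.mem_range.mpr hj) hj'
      have h2 : ∑ i ∈ range n, (if i = j then (1:ℕ) else 0) = 1 := by
        rw [Finset.sum_eq_single j]
        · simp
        · intro i _ hij; simp [hij]
        · intro hj'; exact absurd (Finset.mem_range.mpr hj) hj'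
      rw [h1, h2, hy]
      omega
  | zero => exact ⟨0, fun _ => 0, by simp⟩
  | add y z _ _ ihy ihz =>
    obtain ⟨c0, c, hc⟩ := ihy
    obtain ⟨d0, d, hd⟩ := ihz
    refine ⟨c0 + d0, fun j => c j + d j, ?_⟩
    have h1 : ∑ j ∈ range n, (c j + d j) * p ^ j
        = ∑ j ∈ range n, c j * p ^ j + ∑ j ∈ range n, d j * p ^ j := by
      rw [← Finset.sum_add_distrib]; exact Finset.sum_congr rfl fun j _ => by ring
    have h2 : ∑ j ∈ range n, (c j + d j) = ∑ j ∈ range n, c j + ∑ j ∈ range n, d j :=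
      Finset.sum_add_distrib
    have h3 : (c0 + d0 + (∑ j ∈ range n, c j + ∑ j ∈ range n, d j)) * p ^ n
        = (c0 + ∑ j ∈ range n, c j) * p ^ n + (d0 + ∑ j ∈ range n, d j) * p ^ n := by ring
    rw [h1, h2, h3]
    omega

/-- minimality: any a in Gamma with a + m divisible by p^n, m < p^n, has a + m >= ds m * p^n -/
lemma min_bound (hp : 1 < p) {a m : ℕ} (ha : a ∈ Gamma p n) (hm : m < p ^ n)
    (hdvd : p ^ n ∣ a + m) : ∃ k, ds p m ≤ k ∧ a + m = k * p ^ n := by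
  obtain ⟨c0, c, hc⟩ := mem_gamma_elim hp ha
  set s := ∑ j ∈ range n, c j * p ^ j with hs
  set K0 := c0 + ∑ j ∈ range n, c j with hK0
  have hN0 : 0 < p ^ n := pow_pos (by omega : 0 < p) n
  have h1 : (a + s) % p ^ n = 0 := by rw [hc]; exact Nat.mul_mod_left _ _
  have h2 : (a + m) % p ^ n = 0 := by
    obtain ⟨u, hu⟩ := hdvd; rw [hu]; exact Nat.mul_mod_right _ _
  have h3 : s ≡ m [MOD p ^ n] := Nat.ModEq.add_left_cancel' a (by rw [Nat.ModEq, h1, h2])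
  have hsm : s % p ^ n = m := by rw [Nat.ModEq] at h3; rw [h3, Nat.mod_eq_of_lt hm]
  set l := s / p ^ n with hl
  have hdm : l * p ^ n + m = s := by
    rw [hl, Nat.mul_comm, ← hsm]
    exact Nat.div_add_mod s (p ^ n)
  have hcount : l + ds p m ≤ ∑ j ∈ range n, c j := by
    have := count_ge hp n 0 c l m hm (by omega)
    omega
  have hKl : l ≤ K0 := by omega
  refine ⟨K0 - l, by omega, ?_⟩
  have hmul : K0 * p ^ n = (K0 - l) * p ^ n + l * p ^ n := by
    rw [← Nat.add_mul, Nat.sub_add_cancel hKl]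
  have hA : a + m + l * p ^ n = K0 * p ^ n := by rw [← hc, ← hdm]; ring
  omega

/-- w m := ds m * p^n - m ; stated via its defining identity and membership -/
lemma w_mem (hp : 1 < p) {m : ℕ} (hm : m < p ^ n) :
    (ds p m * p ^ n - m) + m = ds p m * p ^ n ∧ (ds p m * p ^ n - m) ∈ Gamma p n := by
  obtain ⟨c, hc1, hc2⟩ := exists_rep hp n m hm
  have hterm : ∀ j ∈ range n, c j * (p ^ n - p ^ j) + c j * p ^ j = c j * p ^ n := by
    intro j hj
    have hle : p ^ j ≤ p ^ n := Nat.pow_le_pow_right (by omega) (le_of_lt (Finset.mem_range.mp hj))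
    rw [← Nat.mul_add, Nat.sub_add_cancel hle]
  have hkey : (∑ j ∈ range n, c j * (p ^ n - p ^ j)) + m = ds p m * p ^ n := by
    calc (∑ j ∈ range n, c j * (p ^ n - p ^ j)) + m
        = (∑ j ∈ range n, c j * (p ^ n - p ^ j)) + ∑ j ∈ range n, c j * p ^ j := by rw [hc2]
      _ = ∑ j ∈ range n, (c j * (p ^ n - p ^ j) + c j * p ^ j) := Finset.sum_add_distrib.symm
      _ = ∑ j ∈ range n, c j * p ^ n := Finset.sum_congr rfl hterm
      _ = (∑ j ∈ range n, c j) * p ^ n := by rw [Finset.sum_mul]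
      _ = ds p m * p ^ n := by rw [hc1]
  have hW : ds p m * p ^ n - m = ∑ j ∈ range n, c j * (p ^ n - p ^ j) := by omega
  constructor
  · omega
  · rw [hW]
    refine AddSubmonoid.sum_mem _ fun j hj => ?_
    have : (p ^ n - p ^ j) ∈ Gamma p n :=
      AddSubmonoid.subset_closure (Or.inr ⟨j, Finset.mem_range.mp hj, rfl⟩)
    simpa [smul_eq_mul] using (Gamma p n).nsmul_mem this (c j)

lemma pow_mem_Gamma : (p ^ n) ∈ Gamma p n :=
  AddSubmonoid.subset_closure (Or.inl rfl)

/-- injectivity of w on [0, p^n) -/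
lemma w_inj (hp : 1 < p) {m₁ m₂ : ℕ} (h₁ : m₁ < p ^ n) (h₂ : m₂ < p ^ n)
    (h : ds p m₁ * p ^ n - m₁ = ds p m₂ * p ^ n - m₂) : m₁ = m₂ := by
  have hN0 : 0 < p ^ n := pow_pos (by omega : 0 < p) n
  obtain ⟨hw1, -⟩ := w_mem hp h₁
  obtain ⟨hw2, -⟩ := w_mem hp h₂
  rw [h] at hw1
  have hk : ds p m₁ = ds p m₂ := by
    rcases lt_trichotomy (ds p m₁) (ds p m₂) with hlt | heq | hlt
    · have h5 : ds p m₁ + 1 ≤ ds p m₂ := hlt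
      have h6 := Nat.mul_le_mul_right (p ^ n) h5
      rw [add_mul, one_mul] at h6
      omega
    · exact heq
    · have h5 : ds p m₂ + 1 ≤ ds p m₁ := hlt
      have h6 := Nat.mul_le_mul_right (p ^ n) h5
      rw [add_mul, one_mul] at h6
      omega
  rw [hk] at hw1
  omega

end GammaAux

section AlgebraPart

open Polynomial GammaAux

variable {K : Type*} [Field K] {p n : ℕ}

/-- the monomial `X^a` as an element of `gammaAlg`. -/
noncomputable def monoG (K : Type*) [Field K] (p n : ℕ) (a : ℕ) (ha : a ∈ Gamma p n) :
    ↥(gammaAlg K p n) :=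
  ⟨Polynomial.X ^ a, Algebra.subset_adjoin ⟨a, ha, rfl⟩⟩

@[simp] lemma monoG_coe (a : ℕ) (ha : a ∈ Gamma p n) :
    ((monoG K p n a ha : ↥(gammaAlg K p n)) : Polynomial K) = X ^ a := rfl

lemma gammaAlg_toSubmodule :
    Subalgebra.toSubmodule (gammaAlg K p n)
      = Submodule.span K {f : Polynomial K | ∃ a ∈ Gamma p n, f = X ^ a} := by
  rw [gammaAlg, Algebra.adjoin_eq_span]
  let M : Submonoid (Polynomial K) :=
    { carrier := {f : Polynomial K | ∃ a ∈ Gamma p n, f = X ^ a}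
      one_mem' := ⟨0, zero_mem _, (pow_zero X).symm⟩
      mul_mem' := by
        rintro f g ⟨a, ha, rfl⟩ ⟨b, hb, rfl⟩
        exact ⟨a + b, add_mem ha hb, (pow_add X a b).symm⟩ }
  have hM : Submonoid.closure {f : Polynomial K | ∃ a ∈ Gamma p n, f = X ^ a} = M :=
    Submonoid.closure_eq M
  rw [hM]
  rfl

lemma coeff_eq_zero_of_not_mem {f : Polynomial K} (hf : f ∈ gammaAlg K p n) {d : ℕ}
    (hd : d ∉ Gamma p n) : f.coeff d = 0 := by
  have hf' : f ∈ Submodule.span K {f : Polynomial K | ∃ a ∈ Gamma p n, f = X ^ a} := by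
    rw [← gammaAlg_toSubmodule]; exact hf
  have hle : Submodule.span K {f : Polynomial K | ∃ a ∈ Gamma p n, f = X ^ a}
      ≤ LinearMap.ker (lcoeff K d) := by
    rw [Submodule.span_le]
    rintro g ⟨a, ha, rfl⟩
    simp only [SetLike.mem_coe, LinearMap.mem_ker, lcoeff_apply, coeff_X_pow]
    have : a ≠ d := fun h => hd (h ▸ ha)
    simp [this, Ne.symm this]
  simpa using hle hf'

lemma span_monos_top :
    Submodule.span K {y : ↥(gammaAlg K p n) | ∃ a ∈ Gamma p n, (y : Polynomial K) = X ^ a} = ⊤ := by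
  have hinj : Function.Injective ((gammaAlg K p n).val.toLinearMap) := Subtype.val_injective
  apply Submodule.map_injective_of_injective hinj
  rw [Submodule.map_span, Submodule.map_top]
  have hrange : LinearMap.range (gammaAlg K p n).val.toLinearMap
      = Subalgebra.toSubmodule (gammaAlg K p n) := by
    ext f
    constructor
    · rintro ⟨y, rfl⟩; exact y.2
    · intro hf; exact ⟨⟨f, hf⟩, rfl⟩
  rw [hrange, gammaAlg_toSubmodule]
  congr 1
  ext f
  simp only [Set.mem_image, Set.mem_setOf_eq]
  constructor
  · rintro ⟨y, ⟨a, ha, hy⟩, rfl⟩; exact ⟨a, ha, hy⟩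
  · rintro ⟨a, ha, rfl⟩
    exact ⟨⟨X ^ a, Algebra.subset_adjoin ⟨a, ha, rfl⟩⟩, ⟨a, ha, rfl⟩, rfl⟩

end AlgebraPart

open Polynomial GammaAux in
set_option maxHeartbeats 1600000 in
/-- The quotient `K[T^{Γ_{p,n}}]/(T^{p^n})` has dimension `p^n` over `K`; it
is generated by the classes `x_j` of `T^{p^n - p^j}` (`0 ≤ j ≤ n-1`), and
these satisfy `x_j^p = 0`. -/
theorem Gamma_quotient_dim (K : Type*) [Field K] (p : ℕ) (hp : p.Prime)
    [CharP K p] (n : ℕ) (hn : 1 ≤ n)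
    (t : ↥(gammaAlg K p n)) (ht : (t : Polynomial K) = Polynomial.X ^ (p ^ n))
    (x : Fin n → ↥(gammaAlg K p n))
    (hx : ∀ j : Fin n, (x j : Polynomial K) = Polynomial.X ^ (p ^ n - p ^ (j : ℕ)))
    (I : Ideal ↥(gammaAlg K p n)) (hI : I = Ideal.span {t}) :
    Module.finrank K (↥(gammaAlg K p n) ⧸ I) = p ^ n ∧
    Algebra.adjoin K
      (Set.range (fun j : Fin n => Ideal.Quotient.mk I (x j))) = ⊤ ∧
    ∀ j : Fin n, (Ideal.Quotient.mk I (x j)) ^ p = 0 := by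
  subst hI
  classical
  have hp1 : 1 < p := hp.one_lt
  have hp2 : 2 ≤ p := hp.two_le
  have hN0 : 0 < p ^ n := pow_pos hp.pos n
  set f : ↥(gammaAlg K p n) →ₗ[K] (↥(gammaAlg K p n) ⧸ Ideal.span {t}) :=
    (Ideal.Quotient.mkₐ K (Ideal.span {t})).toLinearMap with hf
  have hfmk : ∀ z : ↥(gammaAlg K p n), f z = Ideal.Quotient.mk (Ideal.span {t}) z :=
    fun z => rfl
  have hft : f t = 0 := by
    rw [hfmk]
    exact Ideal.Quotient.eq_zero_iff_mem.mpr (Ideal.subset_span rfl)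
  have hsurj : Function.Surjective f := Ideal.Quotient.mkₐ_surjective K _
  -- the spanning set
  have h1 : Submodule.span K
      (f '' {y : ↥(gammaAlg K p n) | ∃ a ∈ Gamma p n, (y : Polynomial K) = X ^ a}) = ⊤ := by
    rw [← Submodule.map_span, span_monos_top, Submodule.map_top, LinearMap.range_eq_top.mpr hsurj]
  -- basic monomial identities
  have monoG_mul : ∀ (a b : ℕ) (ha : a ∈ Gamma p n) (hb : b ∈ Gamma p n),
      monoG K p n (a + b) (add_mem ha hb) = monoG K p n a ha * monoG K p n b hb := by
    intro a b ha hb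
    apply Subtype.ext
    show (X : Polynomial K) ^ (a + b) = X ^ a * X ^ b
    rw [pow_add]
  -- the Apery family
  have hwmem : ∀ m : Fin (p ^ n), (ds p (m : ℕ) * p ^ n - (m : ℕ)) ∈ Gamma p n :=
    fun m => (w_mem hp1 m.2).2
  set q : Fin (p ^ n) → (↥(gammaAlg K p n) ⧸ Ideal.span {t}) :=
    fun m => f (monoG K p n (ds p (m : ℕ) * p ^ n - (m : ℕ)) (hwmem m)) with hq
  -- spanning step
  have key : ∀ (a : ℕ) (ha : a ∈ Gamma p n),
      f (monoG K p n a ha) ∈ Submodule.span K (Set.range q) := by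
    intro a ha
    obtain ⟨m, hmlt, hdvd⟩ : ∃ m, m < p ^ n ∧ p ^ n ∣ a + m := by
      rcases Nat.eq_zero_or_pos (a % p ^ n) with h | h
      · refine ⟨0, hN0, ?_⟩
        rw [add_zero]
        exact Nat.dvd_of_mod_eq_zero h
      · have hlt : a % p ^ n < p ^ n := Nat.mod_lt a hN0
        refine ⟨p ^ n - a % p ^ n, by omega, ?_⟩
        apply Nat.dvd_of_mod_eq_zero
        have h3 := Nat.div_add_mod a (p ^ n)
        have h4 : a + (p ^ n - a % p ^ n) = p ^ n * (a / p ^ n) + p ^ n := by omega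
        rw [h4, Nat.mul_add_mod, Nat.mod_self]
    obtain ⟨k, hk, hak⟩ := min_bound hp1 ha hmlt hdvd
    obtain ⟨hw_add, hw_mem'⟩ := w_mem (n := n) hp1 hmlt
    rcases Nat.eq_or_lt_of_le hk with heq | hlt
    · -- a = w m
      rw [← heq] at hak
      have ha_w : a = ds p m * p ^ n - m := by omega
      have hmono : monoG K p n a ha = monoG K p n (ds p m * p ^ n - m) hw_mem' := by
        apply Subtype.ext
        show (X : Polynomial K) ^ a = X ^ (ds p m * p ^ n - m)
        rw [ha_w]
      rw [hmono]
      have : f (monoG K p n (ds p m * p ^ n - m) hw_mem') = q ⟨m, hmlt⟩ := rfl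
      rw [this]
      exact Submodule.subset_span (Set.mem_range_self _)
    · -- a strictly above w m : it lies in the ideal
      obtain ⟨r', har⟩ : ∃ r', a = (r' * p ^ n + (ds p m * p ^ n - m)) + p ^ n := by
        refine ⟨k - ds p m - 1, ?_⟩
        have hk' : k = ds p m + 1 + (k - ds p m - 1) := by omega
        have hexp : k * p ^ n
            = ds p m * p ^ n + p ^ n + (k - ds p m - 1) * p ^ n := by
          conv_lhs => rw [hk']
          ring
        omega
      have hb : (r' * p ^ n + (ds p m * p ^ n - m)) ∈ Gamma p n := by
        refine add_mem ?_ hw_mem'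
        simpa [smul_eq_mul] using (Gamma p n).nsmul_mem (pow_mem_Gamma (p := p) (n := n)) r'
      have hsplit : monoG K p n a ha = t * monoG K p n _ hb := by
        apply Subtype.ext
        show (X : Polynomial K) ^ a
          = (t : Polynomial K) * X ^ (r' * p ^ n + (ds p m * p ^ n - m))
        rw [ht, ← pow_add]
        congr 1
        omega
      rw [hsplit, hfmk, map_mul]
      have hmt : Ideal.Quotient.mk (Ideal.span {t}) t = 0 :=
        Ideal.Quotient.eq_zero_iff_mem.mpr (Ideal.subset_span rfl)
      rw [hmt, zero_mul]
      exact Submodule.zero_mem _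
  have hq_top : Submodule.span K (Set.range q) = ⊤ := by
    rw [← top_le_iff, ← h1, Submodule.span_le]
    rintro y ⟨z, ⟨a, ha, hz⟩, rfl⟩
    have hz' : z = monoG K p n a ha := Subtype.ext hz
    rw [hz']
    exact key a ha
  -- linear independence
  have hli : LinearIndependent K q := by
    rw [Fintype.linearIndependent_iff]
    intro g hg m₀
    set y : ↥(gammaAlg K p n) :=
      ∑ m : Fin (p ^ n), g m • monoG K p n (ds p (m : ℕ) * p ^ n - (m : ℕ)) (hwmem m) with hy
    have hπy : f y = 0 := by
      rw [hy, map_sum]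
      simpa [map_smul] using hg
    have hyI : y ∈ Ideal.span {t} := by
      rw [hfmk] at hπy
      exact Ideal.Quotient.eq_zero_iff_mem.mp hπy
    obtain ⟨z, hz⟩ := (Ideal.mem_span_singleton).mp hyI
    have hcoe : ((y : ↥(gammaAlg K p n)) : Polynomial K)
        = ∑ m : Fin (p ^ n), g m • (X : Polynomial K) ^ (ds p (m : ℕ) * p ^ n - (m : ℕ)) := by
      rw [hy]
      rw [show ((↑(∑ m : Fin (p ^ n), g m • monoG K p n (ds p (m : ℕ) * p ^ n - (m : ℕ))
          (hwmem m)) : Polynomial K))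
        = (gammaAlg K p n).val.toLinearMap
            (∑ m : Fin (p ^ n), g m • monoG K p n (ds p (m : ℕ) * p ^ n - (m : ℕ)) (hwmem m))
        from rfl]
      rw [map_sum]
      simp [monoG]
    obtain ⟨hw_add, -⟩ := w_mem (n := n) hp1 m₀.2
    -- coefficient of X ^ (w m₀)
    have hlhs : (↑y : Polynomial K).coeff (ds p (m₀ : ℕ) * p ^ n - (m₀ : ℕ)) = g m₀ := by
      rw [hcoe, Polynomial.finset_sum_coeff]
      rw [Finset.sum_eq_single m₀]
      · rw [Polynomial.coeff_smul, coeff_X_pow, if_pos rfl, smul_eq_mul, mul_one]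
      · intro m _ hm
        have hne : ds p (m : ℕ) * p ^ n - (m : ℕ) ≠ ds p (m₀ : ℕ) * p ^ n - (m₀ : ℕ) := by
          intro hcontra
          exact hm (Fin.ext (w_inj hp1 m.2 m₀.2 hcontra))
        rw [Polynomial.coeff_smul, coeff_X_pow, if_neg (Ne.symm hne), smul_zero]
      · intro hmem
        exact absurd (Finset.mem_univ m₀) hmem
    have hrhs : (↑y : Polynomial K).coeff (ds p (m₀ : ℕ) * p ^ n - (m₀ : ℕ)) = 0 := by
      have hyz : (↑y : Polynomial K) = (↑z : Polynomial K) * X ^ (p ^ n) := by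
        rw [hz]
        push_cast
        rw [ht]
        ring
      rw [hyz, Polynomial.coeff_mul_X_pow']
      by_cases hcase : p ^ n ≤ ds p (m₀ : ℕ) * p ^ n - (m₀ : ℕ)
      · rw [if_pos hcase]
        have hds1 : 1 ≤ ds p (m₀ : ℕ) := by
          rcases Nat.eq_zero_or_pos (ds p (m₀ : ℕ)) with h0 | h0
          · rw [h0, zero_mul] at hw_add hcase; omega
          · exact h0
        apply coeff_eq_zero_of_not_mem z.2
        intro hbG
        have hexp : ds p (m₀ : ℕ) * p ^ n = (ds p (m₀ : ℕ) - 1) * p ^ n + p ^ n := by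
          conv_lhs => rw [show ds p (m₀ : ℕ) = (ds p (m₀ : ℕ) - 1) + 1 by omega]
          ring
        obtain ⟨k', hk', hbk'⟩ := min_bound hp1 hbG m₀.2
          ⟨ds p (m₀ : ℕ) - 1, by rw [Nat.mul_comm (p ^ n) (ds p (m₀ : ℕ) - 1)]; omega⟩
        have hmul := Nat.mul_le_mul_right (p ^ n) hk'
        omega
      · rw [if_neg hcase]
    have := hlhs.symm.trans hrhs
    exact this
  -- the basis and the dimension
  have hbasis : Module.Basis (Fin (p ^ n)) K (↥(gammaAlg K p n) ⧸ Ideal.span {t}) :=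
    Module.Basis.mk hli (by rw [hq_top])
  refine ⟨?_, ?_, ?_⟩
  · rw [Module.finrank_eq_card_basis hbasis, Fintype.card_fin]
  · -- adjoin of the x j classes is everything
    have hsub : ∀ (a : ℕ) (ha : a ∈ Gamma p n),
        f (monoG K p n a ha) ∈ Algebra.adjoin K
          (Set.range (fun j : Fin n => Ideal.Quotient.mk (Ideal.span {t}) (x j))) := by
      intro a ha
      induction ha using AddSubmonoid.closure_induction with
      | mem y hy =>
        rcases hy with hy | ⟨j, hj, hy⟩
        · have hyG : y ∈ Gamma p n := by
            rw [hy]; exact pow_mem_Gamma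
          rw [show monoG K p n y hyG = t from Subtype.ext (by rw [monoG_coe, ht, hy])]
          rw [hft]
          exact Subalgebra.zero_mem _
        · have hyG : y ∈ Gamma p n := by
            rw [hy]
            exact AddSubmonoid.subset_closure (Or.inr ⟨j, hj, rfl⟩)
          rw [show monoG K p n y hyG = x ⟨j, hj⟩ from
            Subtype.ext (by rw [monoG_coe, hx ⟨j, hj⟩, hy])]
          rw [hfmk]
          exact Algebra.subset_adjoin ⟨⟨j, hj⟩, rfl⟩
      | zero =>
        rw [show monoG K p n 0 (zero_mem _) = 1 from Subtype.ext (by rw [monoG_coe, pow_zero]; rfl)]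
        rw [hfmk, map_one]
        exact Subalgebra.one_mem _
      | add a b ha' hb' iha ihb =>
        rw [monoG_mul a b ha' hb', hfmk, map_mul]
        exact Subalgebra.mul_mem _ iha ihb
    rw [← top_le_iff]
    intro v _
    have hv : v ∈ Submodule.span K
        (f '' {y : ↥(gammaAlg K p n) | ∃ a ∈ Gamma p n, (y : Polynomial K) = X ^ a}) := by
      rw [h1]; trivial
    have hsub' : f '' {y : ↥(gammaAlg K p n) | ∃ a ∈ Gamma p n, (y : Polynomial K) = X ^ a}
        ⊆ (Subalgebra.toSubmodule (Algebra.adjoin K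
          (Set.range (fun j : Fin n => Ideal.Quotient.mk (Ideal.span {t}) (x j)))) : Set _) := by
      rintro v' ⟨z, ⟨a, ha, hza⟩, rfl⟩
      rw [show z = monoG K p n a ha from Subtype.ext hza]
      exact hsub a ha
    exact Submodule.span_le.mpr hsub' hv
  · -- x j ^ p = 0
    intro j
    have hj : (j : ℕ) < n := j.2
    have hple : p ^ (j : ℕ) ≤ p ^ n := Nat.pow_le_pow_right hp.pos (le_of_lt hj)
    have hple1 : p ^ ((j : ℕ) + 1) ≤ p ^ n := Nat.pow_le_pow_right hp.pos hj
    set e := (p - 1) * p ^ n - p ^ ((j : ℕ) + 1) with he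
    have hp1n : p ^ ((j : ℕ) + 1) ≤ (p - 1) * p ^ n :=
      le_trans hple1 (Nat.le_mul_of_pos_left _ (by omega))
    have heid : e + p ^ ((j : ℕ) + 1) = (p - 1) * p ^ n := by omega
    have hq2 : (p - 2 + 1) * p ^ n = (p - 2) * p ^ n + p ^ n := by ring
    have hq3 : p - 2 + 1 = p - 1 := by omega
    have hq4 : (p - 1) * p ^ n = (p - 2) * p ^ n + p ^ n := by rw [← hq3, hq2]
    have heG : e ∈ Gamma p n := by
      have hnsmul : ∀ c : ℕ, c * p ^ n ∈ Gamma p n := fun c => by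
        simpa [smul_eq_mul] using (Gamma p n).nsmul_mem (pow_mem_Gamma (p := p) (n := n)) c
      rcases Nat.lt_or_ge ((j : ℕ) + 1) n with hlt | hge
      · have hgen : (p ^ n - p ^ ((j : ℕ) + 1)) ∈ Gamma p n :=
          AddSubmonoid.subset_closure (Or.inr ⟨(j : ℕ) + 1, hlt, rfl⟩)
        have hsub2 : (p ^ n - p ^ ((j : ℕ) + 1)) + p ^ ((j : ℕ) + 1) = p ^ n :=
          Nat.sub_add_cancel hple1
        have : e = (p - 2) * p ^ n + (p ^ n - p ^ ((j : ℕ) + 1)) := by omega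
        rw [this]
        exact add_mem (hnsmul _) hgen
      · have hjn : (j : ℕ) + 1 = n := by omega
        have : e = (p - 2) * p ^ n := by rw [he, hjn]; omega
        rw [this]
        exact hnsmul _
    have hkey : x j ^ p = t * monoG K p n e heG := by
      apply Subtype.ext
      have hcoe_pow : ((x j ^ p : ↥(gammaAlg K p n)) : Polynomial K)
          = ((x j : Polynomial K)) ^ p := by
        push_cast
        ring
      rw [hcoe_pow, hx j]
      show ((X : Polynomial K) ^ (p ^ n - p ^ (j : ℕ))) ^ p
        = ((t : ↥(gammaAlg K p n)) : Polynomial K) * X ^ e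
      rw [ht, ← pow_mul, ← pow_add]
      congr 1
      have h1' : (p ^ n - p ^ (j : ℕ)) * p + p ^ (j : ℕ) * p = p ^ n * p := by
        rw [← Nat.add_mul, Nat.sub_add_cancel hple]
      have h2' : p ^ (j : ℕ) * p = p ^ ((j : ℕ) + 1) := (pow_succ p (j : ℕ)).symm
      have h3' : p ^ n * p = p * p ^ n := Nat.mul_comm _ _
      have hq5 : p - 1 + 1 = p := by omega
      have h4' : p * p ^ n = (p - 1) * p ^ n + p ^ n := by
        calc p * p ^ n = (p - 1 + 1) * p ^ n := by rw [hq5]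
          _ = (p - 1) * p ^ n + p ^ n := by ring
      omega
    calc (Ideal.Quotient.mk (Ideal.span {t}) (x j)) ^ p
        = Ideal.Quotient.mk (Ideal.span {t}) (x j ^ p) := by rw [map_pow]
      _ = Ideal.Quotient.mk (Ideal.span {t}) (t * monoG K p n e heG) := by rw [hkey]
      _ = 0 := by
          rw [map_mul]
          have : Ideal.Quotient.mk (Ideal.span {t}) t = 0 :=
            Ideal.Quotient.eq_zero_iff_mem.mpr (Ideal.subset_span rfl)
          rw [this, zero_mul]
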